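/- For any positive integer m and real numbers 0 ≤ x_1 ≤ x_2 ≤ ... ≤ x_m ≤ 1, the quantity x_1(1-x_1) + (x_2-x_1)(1-x_2) + ... + (x_m-x_{m-1})(1-x_m) is at most m/(2(m+1)), with equality when x_i = i/(m+1) for all i. -/

import Mathlib

open Finset

lemma key_identity (x : ℕ → ℝ) (h0 : x 0 = 0) (n : ℕ) :
    ∑ i ∈ Finset.Icc 1 n, (x i - x (i - 1)) * (1 - x i)
      = x n - x n ^ 2 / 2 - (1/2) * ∑ i ∈ Finset.Icc 1 n, (x i - x (i - 1)) ^ 2 := by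
  induction n with
  | zero => simp [h0]
  | succ n ih =>
      rw [Finset.sum_Icc_succ_top (Nat.le_add_left 1 n),
          Finset.sum_Icc_succ_top (Nat.le_add_left 1 n), ih]
      simp only [Nat.add_sub_cancel]
      ring

lemma telescope (x : ℕ → ℝ) (h0 : x 0 = 0) (n : ℕ) :
    ∑ i ∈ Finset.Icc 1 n, (x i - x (i - 1)) = x n := by
  induction n with
  | zero => simp [h0]
  | succ n ih =>
      rw [Finset.sum_Icc_succ_top (Nat.le_add_left 1 n), ih]
      simp

/-- For any positive integer `m` and reals `0 ≤ x 1 ≤ ⋯ ≤ x m ≤ 1`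
(with the convention `x 0 = 0`), the staircase area
`∑_{i=1}^m (x i - x (i-1)) * (1 - x i)` is at most `m / (2 (m+1))`,
with equality when `x i = i / (m+1)` for all `i`. -/
theorem stmt0 (m : ℕ) (hm : 0 < m) (x : ℕ → ℝ)
    (h0 : x 0 = 0)
    (hmono : ∀ i, i < m → x i ≤ x (i + 1))
    (hlb : 0 ≤ x 1) (hub : x m ≤ 1) :
    (∑ i ∈ Finset.Icc 1 m, (x i - x (i - 1)) * (1 - x i)) ≤ m / (2 * (m + 1)) ∧
    ((∀ i, 1 ≤ i → i ≤ m → x i = i / (m + 1)) →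
      (∑ i ∈ Finset.Icc 1 m, (x i - x (i - 1)) * (1 - x i)) = m / (2 * (m + 1))) := by
  constructor
  · -- inequality
    rw [key_identity x h0 m]
    set T := ∑ i ∈ Finset.Icc 1 m, (x i - x (i - 1)) ^ 2 with hT
    -- Cauchy-Schwarz on the m+1 increments
    set f : ℕ → ℝ := fun i => if i = m + 1 then 1 - x m else x i - x (i - 1) with hf
    have hsum : ∑ i ∈ Finset.Icc 1 (m + 1), f i = 1 := by
      rw [Finset.sum_Icc_succ_top (Nat.le_add_left 1 m)]
      have h1 : ∑ i ∈ Finset.Icc 1 m, f i = ∑ i ∈ Finset.Icc 1 m, (x i - x (i - 1)) := by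
        apply Finset.sum_congr rfl
        intro i hi
        simp only [Finset.mem_Icc] at hi
        simp [hf, Nat.ne_of_lt (Nat.lt_succ_of_le hi.2)]
      rw [h1, telescope x h0 m]
      simp [hf]
    have hsq : ∑ i ∈ Finset.Icc 1 (m + 1), f i ^ 2 = T + (1 - x m) ^ 2 := by
      rw [Finset.sum_Icc_succ_top (Nat.le_add_left 1 m)]
      have h1 : ∑ i ∈ Finset.Icc 1 m, f i ^ 2 = T := by
        apply Finset.sum_congr rfl
        intro i hi
        simp only [Finset.mem_Icc] at hi
        simp [hf, Nat.ne_of_lt (Nat.lt_succ_of_le hi.2)]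
      rw [h1]
      simp [hf]
    have hcard : (Finset.Icc 1 (m + 1)).card = m + 1 := by
      rw [Nat.card_Icc]; omega
    have hcs := sq_sum_le_card_mul_sum_sq (s := Finset.Icc 1 (m + 1)) (f := f)
    rw [hsum, hsq, hcard] at hcs
    have hcs' : (1 : ℝ) ≤ (m + 1) * (T + (1 - x m) ^ 2) := by
      have := hcs
      push_cast at this ⊢
      linarith
    have hmpos : (0 : ℝ) < m + 1 := by positivity
    rw [le_div_iff₀ (by positivity : (0:ℝ) < 2 * (m + 1))]
    nlinarith [sq_nonneg (1 - x m)]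
  · -- equality case
    intro hx
    have hterm : ∀ i ∈ Finset.Icc 1 m, (x i - x (i - 1)) * (1 - x i)
        = ((m : ℝ) + 1 - i) / ((m : ℝ) + 1) ^ 2 := by
      intro i hi
      simp only [Finset.mem_Icc] at hi
      have hxi : x i = (i : ℝ) / (m + 1) := hx i hi.1 hi.2
      have hxi1 : x (i - 1) = ((i : ℝ) - 1) / (m + 1) := by
        rcases Nat.eq_or_lt_of_le hi.1 with h | h
        · rw [← h]; simp [h0]
        · have h2 : 1 ≤ i - 1 := by omega
          have h3 : i - 1 ≤ m := by omega
          rw [hx (i - 1) h2 h3]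
          have : ((i - 1 : ℕ) : ℝ) = (i : ℝ) - 1 := by
            push_cast [Nat.cast_sub hi.1]; ring
          rw [this]
      rw [hxi, hxi1]
      have hmpos : ((m : ℝ) + 1) ≠ 0 := by positivity
      field_simp
      ring_nf
    rw [Finset.sum_congr rfl hterm, ← Finset.sum_div]
    have hsum : ∑ i ∈ Finset.Icc 1 m, ((m : ℝ) + 1 - i) = m * (m + 1) / 2 := by
      have h1 : ∀ n : ℕ, ∑ i ∈ Finset.Icc 1 n, (i : ℝ) = n * (n + 1) / 2 := by
        intro n
        induction n with
        | zero => simp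
        | succ n ih =>
            rw [Finset.sum_Icc_succ_top (Nat.le_add_left 1 n), ih]
            push_cast
            ring
      rw [Finset.sum_sub_distrib, h1 m]
      simp [Finset.sum_const, Nat.card_Icc]
      ring
    rw [hsum]
    have : ((m : ℝ) + 1) ≠ 0 := by positivity
    field_simp
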